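/- The total number of subgroups of Z_{p^{λ1}} × Z_{p^{λ2}}, where λ1 ≥ λ2 ≥ 1, equals [(λ1−λ2+1)p^{λ2+2} − (λ1−λ2−1)p^{λ2+1} − (λ1+λ2+3)p + (λ1+λ2+1)] / (p−1)^2. -/

import Mathlib

open AddSubgroup

section Goursat

variable {G H : Type*} [AddCommGroup G] [AddCommGroup H]

/-- The subgroup of `G × H` built from `A ≤ G`, `B ≤ H` and a hom `φ : A →+ H ⧸ B`. -/
def mySub (A : AddSubgroup G) (B : AddSubgroup H) (φ : A →+ H ⧸ B) :
    AddSubgroup (G × H) where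
  carrier := {z | ∃ h : z.1 ∈ A, (QuotientAddGroup.mk z.2 : H ⧸ B) = φ ⟨z.1, h⟩}
  zero_mem' := ⟨A.zero_mem, by
    show (QuotientAddGroup.mk (0 : H) : H ⧸ B) = φ ⟨0, A.zero_mem⟩
    have : (⟨(0 : G), A.zero_mem⟩ : A) = 0 := rfl
    rw [this, map_zero]
    rfl⟩
  add_mem' := by
    rintro ⟨x1, y1⟩ ⟨x2, y2⟩ ⟨h1, e1⟩ ⟨h2, e2⟩
    simp only at h1 e1 h2 e2
    refine ⟨A.add_mem h1 h2, ?_⟩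
    show (QuotientAddGroup.mk (y1 + y2) : H ⧸ B) = φ ⟨x1 + x2, A.add_mem h1 h2⟩
    have : (⟨x1 + x2, A.add_mem h1 h2⟩ : A) = ⟨x1, h1⟩ + ⟨x2, h2⟩ := rfl
    rw [this, map_add, ← e1, ← e2]
    rfl
  neg_mem' := by
    rintro ⟨x, y⟩ ⟨h, e⟩
    simp only at h e
    refine ⟨A.neg_mem h, ?_⟩
    show (QuotientAddGroup.mk (-y) : H ⧸ B) = φ ⟨-x, A.neg_mem h⟩
    have : (⟨-x, A.neg_mem h⟩ : A) = -⟨x, h⟩ := rfl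
    rw [this, map_neg, ← e]
    rfl

lemma mem_mySub {A : AddSubgroup G} {B : AddSubgroup H} {φ : A →+ H ⧸ B} {z : G × H} :
    z ∈ mySub A B φ ↔ ∃ h : z.1 ∈ A, (QuotientAddGroup.mk z.2 : H ⧸ B) = φ ⟨z.1, h⟩ :=
  Iff.rfl

lemma mySub_injective :
    Function.Injective
      (fun t : Σ (A : AddSubgroup G) (B : AddSubgroup H), (A →+ H ⧸ B) =>
        mySub t.1 t.2.1 t.2.2) := by
  rintro ⟨A, B, φ⟩ ⟨A', B', φ'⟩ (hEq : mySub A B φ = mySub A' B' φ')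
  have memIff : ∀ z : G × H, z ∈ mySub A B φ ↔ z ∈ mySub A' B' φ' := fun z => by rw [hEq]
  have hA : A = A' := by
    ext x
    constructor
    · intro hx
      obtain ⟨y, hy⟩ := QuotientAddGroup.mk_surjective (φ ⟨x, hx⟩)
      obtain ⟨h', _⟩ := (memIff (x, y)).1 ⟨hx, hy⟩
      exact h'
    · intro hx
      obtain ⟨y, hy⟩ := QuotientAddGroup.mk_surjective (φ' ⟨x, hx⟩)
      obtain ⟨h', _⟩ := (memIff (x, y)).2 ⟨hx, hy⟩
      exact h'
  subst hA
  have hB : B = B' := by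
    ext y
    constructor
    · intro hy
      have : ((0 : G), y) ∈ mySub A B φ := ⟨A.zero_mem, by
        show (QuotientAddGroup.mk y : H ⧸ B) = φ ⟨0, A.zero_mem⟩
        have h0 : (⟨(0 : G), A.zero_mem⟩ : A) = 0 := rfl
        rw [h0, map_zero, QuotientAddGroup.eq_zero_iff]
        exact hy⟩
      obtain ⟨h', e'⟩ := (memIff _).1 this
      have : φ' ⟨0, h'⟩ = 0 := by
        have : (⟨0, h'⟩ : A) = 0 := rfl
        rw [this, map_zero]
      rw [this] at e'
      exact (QuotientAddGroup.eq_zero_iff y).1 e'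
    · intro hy
      have : ((0 : G), y) ∈ mySub A B' φ' := ⟨A.zero_mem, by
        show (QuotientAddGroup.mk y : H ⧸ B') = φ' ⟨0, A.zero_mem⟩
        have h0 : (⟨(0 : G), A.zero_mem⟩ : A) = 0 := rfl
        rw [h0, map_zero, QuotientAddGroup.eq_zero_iff]
        exact hy⟩
      obtain ⟨h', e'⟩ := (memIff _).2 this
      have : φ ⟨0, h'⟩ = 0 := by
        have : (⟨0, h'⟩ : A) = 0 := rfl
        rw [this, map_zero]
      rw [this] at e'
      exact (QuotientAddGroup.eq_zero_iff y).1 e'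
  subst hB
  have hφ : φ = φ' := by
    ext x
    obtain ⟨y, hy⟩ := QuotientAddGroup.mk_surjective (φ x)
    have : ((x : G), y) ∈ mySub A B φ := ⟨x.2, by simpa [Subtype.coe_eta] using hy⟩
    obtain ⟨h', e'⟩ := (memIff _).1 this
    have hx : (⟨(x : G), h'⟩ : A) = x := Subtype.ext rfl
    rw [hx] at e'
    rw [← hy, e']
  rw [hφ]

lemma mySub_surjective :
    Function.Surjective
      (fun t : Σ (A : AddSubgroup G) (B : AddSubgroup H), (A →+ H ⧸ B) =>
        mySub t.1 t.2.1 t.2.2) := by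
  intro I
  classical
  set A : AddSubgroup G := I.map (AddMonoidHom.fst G H) with hA
  set B : AddSubgroup H := I.comap (AddMonoidHom.inr G H) with hB
  have exy : ∀ x : A, ∃ y : H, ((x : G), y) ∈ I := by
    rintro ⟨x, hx⟩
    obtain ⟨⟨x', y⟩, hz, hxx⟩ := hx
    subst hxx
    exact ⟨y, hz⟩
  have key : ∀ (x : A) (y y' : H), ((x : G), y) ∈ I → ((x : G), y') ∈ I →
      (QuotientAddGroup.mk y : H ⧸ B) = QuotientAddGroup.mk y' := by
    intro x y y' h h'
    rw [QuotientAddGroup.eq]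
    have : ((0 : G), -y + y') ∈ I := by
      have := I.add_mem (I.neg_mem h) h'
      simpa using this
    exact this
  let f : A → H ⧸ B := fun x => QuotientAddGroup.mk (Classical.choose (exy x))
  have fspec : ∀ x : A, ((x : G), Classical.choose (exy x)) ∈ I := fun x =>
    Classical.choose_spec (exy x)
  have feq : ∀ (x : A) (y : H), ((x : G), y) ∈ I → f x = QuotientAddGroup.mk y := by
    intro x y h
    exact key x _ y (fspec x) h
  have fadd : ∀ x y : A, f (x + y) = f x + f y := by
    intro x y
    have hx := fspec x
    have hy := fspec y
    have hxy : (((x + y : A) : G), Classical.choose (exy x) + Classical.choose (exy y)) ∈ I := by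
      have := I.add_mem hx hy
      simpa using this
    rw [feq _ _ hxy]
    rfl
  refine ⟨⟨A, B, AddMonoidHom.mk' f fadd⟩, ?_⟩
  ext ⟨x, y⟩
  simp only [mem_mySub]
  constructor
  · rintro ⟨hx, e⟩
    have := fspec ⟨x, hx⟩
    simp only [AddMonoidHom.mk'_apply] at e
    rw [show f ⟨x, hx⟩ = QuotientAddGroup.mk (Classical.choose (exy ⟨x, hx⟩)) from rfl] at e
    rw [QuotientAddGroup.eq] at e
    have hmem : ((0 : G), -y + Classical.choose (exy ⟨x, hx⟩)) ∈ I := e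
    have := I.sub_mem this (by exact this)
    have h2 : (x, y) = ((x : G), Classical.choose (exy ⟨x, hx⟩)) +
        ((0 : G), -(-y + Classical.choose (exy ⟨x, hx⟩))) := by
      ext <;> simp
    rw [h2]
    exact I.add_mem (fspec ⟨x, hx⟩) (by simpa using I.neg_mem hmem)
  · intro h
    have hx : x ∈ A := ⟨(x, y), h, rfl⟩
    exact ⟨hx, (feq ⟨x, hx⟩ y h).symm⟩

end Goursat

section ZModSub

open AddSubgroup

variable {n : ℕ} [NeZero n]

lemma zmultiples_eq_gcd (x : ZMod n) :
    zmultiples x = zmultiples ((n.gcd x.val : ℕ) : ZMod n) := by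
  have hn : n ≠ 0 := NeZero.ne n
  set d : ℕ := n.gcd x.val with hd
  apply le_antisymm
  · rw [zmultiples_le, AddSubgroup.mem_zmultiples_iff]
    refine ⟨(x.val / d : ℕ), ?_⟩
    have hdvd : d ∣ x.val := Nat.gcd_dvd_right n x.val
    have : ((x.val / d : ℕ) : ℤ) • ((d : ℕ) : ZMod n) = (((x.val / d) * d : ℕ) : ZMod n) := by
      rw [natCast_zsmul, nsmul_eq_mul, Nat.cast_mul]
    rw [this, Nat.div_mul_cancel hdvd, ZMod.natCast_rightInverse x]
  · rw [zmultiples_le, AddSubgroup.mem_zmultiples_iff]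
    refine ⟨Nat.gcdB n x.val, ?_⟩
    have hbez : (d : ℤ) = n * Nat.gcdA n x.val + x.val * Nat.gcdB n x.val :=
      Nat.gcd_eq_gcd_ab n x.val
    have := congrArg (fun z : ℤ => (z : ZMod n)) hbez
    simp only [Int.cast_add, Int.cast_mul, Int.cast_natCast, ZMod.natCast_self,
      zero_mul, zero_add] at this
    rw [show ((x.val : ℕ) : ZMod n) = x from ZMod.natCast_rightInverse x] at this
    rw [zsmul_eq_mul]
    rw [this]
    ring

lemma exists_divisor_eq (A : AddSubgroup (ZMod n)) :
    ∃ d : ℕ, d ∣ n ∧ A = zmultiples ((d : ℕ) : ZMod n) := by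
  have hsurj : Function.Surjective (Int.castAddHom (ZMod n)) := ZMod.intCast_surjective
  obtain ⟨a, ha⟩ := Int.subgroup_cyclic (A.comap (Int.castAddHom (ZMod n)))
  have hA : A = (A.comap (Int.castAddHom (ZMod n))).map (Int.castAddHom (ZMod n)) :=
    (AddSubgroup.map_comap_eq_self_of_surjective hsurj A).symm
  rw [ha, AddMonoidHom.map_closure] at hA
  have himg : (Int.castAddHom (ZMod n)) '' {a} = {((a : ℤ) : ZMod n)} := by
    simp
  rw [himg] at hA
  have hcl : AddSubgroup.closure {((a : ℤ) : ZMod n)} = zmultiples ((a : ℤ) : ZMod n) := by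
    ext z
    rw [AddSubgroup.mem_closure_singleton, AddSubgroup.mem_zmultiples_iff]
  rw [hcl] at hA
  set x : ZMod n := ((a : ℤ) : ZMod n)
  exact ⟨n.gcd x.val, Nat.gcd_dvd_left _ _, hA.trans (zmultiples_eq_gcd x)⟩

lemma card_zmultiples_divisor {d : ℕ} (hd : d ∣ n) :
    Nat.card (zmultiples ((d : ℕ) : ZMod n)) = n / d := by
  rw [Nat.card_zmultiples, ZMod.addOrderOf_coe d (NeZero.ne n), Nat.gcd_eq_right hd]

end ZModSub

section HomCount

open AddSubgroup

lemma card_hom_zmod (a b : ℕ) (hb : b ≠ 0) :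
    Nat.card (ZMod a →+ ZMod b) = Nat.gcd a b := by
  haveI : NeZero b := ⟨hb⟩
  have e1 : {f : ℤ →+ ZMod b // f a = 0} ≃ (ZMod a →+ ZMod b) := ZMod.lift a
  have e2 : {x : ZMod b // (a : ℤ) • x = 0} ≃ {f : ℤ →+ ZMod b // f a = 0} :=
    (zmultiplesHom (ZMod b)).subtypeEquiv (fun x => by simp [zmultiplesHom_apply])
  rw [← Nat.card_congr (e2.trans e1)]
  set m : ZMod b →+ ZMod b := AddMonoidHom.mulLeft ((a : ℕ) : ZMod b) with hm
  have hker : ∀ x : ZMod b, ((a : ℤ) • x = 0) ↔ x ∈ m.ker := by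
    intro x
    rw [AddMonoidHom.mem_ker, hm]
    rw [zsmul_eq_mul]
    push_cast
    rfl
  rw [Nat.card_congr (Equiv.subtypeEquivRight hker)]
  have hrange : m.range = zmultiples ((a : ℕ) : ZMod b) := by
    ext z
    constructor
    · rintro ⟨x, rfl⟩
      refine ⟨(x.val : ℤ), ?_⟩
      show (x.val : ℤ) • ((a : ℕ) : ZMod b) = m x
      rw [zsmul_eq_mul, hm]
      push_cast
      rw [ZMod.natCast_rightInverse x]
      show x * a = a * x
      exact mul_comm _ _
    · rintro ⟨k, rfl⟩
      refine ⟨((k : ℤ) : ZMod b), ?_⟩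
      show m ((k : ℤ) : ZMod b) = (k : ℤ) • ((a : ℕ) : ZMod b)
      rw [zsmul_eq_mul, hm]
      show (a : ZMod b) * ((k : ℤ) : ZMod b) = ((k : ℤ) : ZMod b) * (a : ZMod b)
      exact mul_comm _ _
  have hq : Nat.card (ZMod b ⧸ m.ker) = b / b.gcd a := by
    rw [Nat.card_congr (QuotientAddGroup.quotientKerEquivRange m).toEquiv, hrange,
      Nat.card_zmultiples, ZMod.addOrderOf_coe a hb]
  have hLag : Nat.card (ZMod b) = Nat.card (ZMod b ⧸ m.ker) * Nat.card m.ker :=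
    AddSubgroup.card_eq_card_quotient_mul_card_addSubgroup m.ker
  rw [Nat.card_zmod, hq] at hLag
  have hgd : b.gcd a ∣ b := Nat.gcd_dvd_left b a
  have hq0 : 0 < b / b.gcd a := Nat.div_pos (Nat.le_of_dvd (Nat.pos_of_ne_zero hb) hgd)
    (Nat.pos_of_ne_zero (fun h => hb (Nat.eq_zero_of_gcd_eq_zero_left h)))
  have hmul : b / b.gcd a * b.gcd a = b := Nat.div_mul_cancel hgd
  have : (b / b.gcd a) * Nat.card m.ker = (b / b.gcd a) * (b.gcd a) := by
    rw [hmul, ← hLag]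
  have := Nat.eq_of_mul_eq_mul_left hq0 this
  rw [this, Nat.gcd_comm]

lemma card_hom_cyclic (A Q : Type*) [AddCommGroup A] [AddCommGroup Q] [Finite A] [Finite Q]
    (hA : IsAddCyclic A) (hQ : IsAddCyclic Q) :
    Nat.card (A →+ Q) = Nat.gcd (Nat.card A) (Nat.card Q) := by
  have eA := zmodAddCyclicAddEquiv hA
  have eQ := zmodAddCyclicAddEquiv hQ
  have e : (ZMod (Nat.card A) →+ ZMod (Nat.card Q)) ≃ (A →+ Q) :=
    ((AddEquiv.addMonoidHomCongrLeft eA).trans (AddEquiv.addMonoidHomCongrRight eQ)).toEquiv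
  rw [← Nat.card_congr e, card_hom_zmod _ _ Nat.card_pos.ne']

end HomCount

section Together

open AddSubgroup

lemma sum_over_subgroups {n : ℕ} [NeZero n] {M₀ : Type*} [AddCommMonoid M₀]
    [Fintype (AddSubgroup (ZMod n))] (f : ℕ → M₀) :
    ∑ A : AddSubgroup (ZMod n), f (Nat.card A) = ∑ d ∈ n.divisors, f (n / d) := by
  have hn : n ≠ 0 := NeZero.ne n
  symm
  refine Finset.sum_bij (fun d _ => zmultiples ((d : ℕ) : ZMod n)) (fun d hd => Finset.mem_univ _)
    ?_ ?_ ?_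
  · intro d1 h1 d2 h2 heq
    have hd1 : d1 ∣ n := (Nat.mem_divisors.mp h1).1
    have hd2 : d2 ∣ n := (Nat.mem_divisors.mp h2).1
    have heq' : zmultiples ((d1 : ℕ) : ZMod n) = zmultiples ((d2 : ℕ) : ZMod n) := heq
    have hcc : Nat.card (zmultiples ((d1 : ℕ) : ZMod n)) =
        Nat.card (zmultiples ((d2 : ℕ) : ZMod n)) := by rw [heq']
    rw [card_zmultiples_divisor hd1, card_zmultiples_divisor hd2] at hcc
    calc d1 = n / (n / d1) := (Nat.div_div_self hd1 hn).symm
      _ = n / (n / d2) := by rw [hcc]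
      _ = d2 := Nat.div_div_self hd2 hn
  · intro A _
    obtain ⟨d, hd, hA⟩ := exists_divisor_eq A
    exact ⟨d, Finset.mem_coe.mpr (Nat.mem_divisors.mpr ⟨hd, hn⟩), hA.symm⟩
  · intro d hd
    rw [card_zmultiples_divisor (Nat.mem_divisors.mp hd).1]

lemma card_addSubgroup_prod_zmod (N M : ℕ) (hN : N ≠ 0) (hM : M ≠ 0) :
    Nat.card (AddSubgroup (ZMod N × ZMod M)) =
      ∑ d ∈ N.divisors, ∑ e ∈ M.divisors, Nat.gcd d e := by
  haveI : NeZero N := ⟨hN⟩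
  haveI : NeZero M := ⟨hM⟩
  classical
  haveI : ∀ B : AddSubgroup (ZMod M), Finite (ZMod M ⧸ B) := fun B => Quotient.finite _
  haveI : ∀ (A : AddSubgroup (ZMod N)) (B : AddSubgroup (ZMod M)),
      Finite (A →+ ZMod M ⧸ B) := fun A B =>
    Finite.of_injective (fun f => (f : A → ZMod M ⧸ B)) DFunLike.coe_injective
  haveI : Fintype (AddSubgroup (ZMod N)) := Fintype.ofFinite _
  haveI : Fintype (AddSubgroup (ZMod M)) := Fintype.ofFinite _
  haveI : ∀ (A : AddSubgroup (ZMod N)) (B : AddSubgroup (ZMod M)),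
      Fintype (A →+ ZMod M ⧸ B) := fun A B => Fintype.ofFinite _
  have hbij : Function.Bijective
      (fun t : Σ (A : AddSubgroup (ZMod N)) (B : AddSubgroup (ZMod M)),
          (A →+ ZMod M ⧸ B) => mySub t.1 t.2.1 t.2.2) :=
    ⟨mySub_injective, mySub_surjective⟩
  rw [← Nat.card_eq_of_bijective _ hbij]
  have hcardhom : ∀ (A : AddSubgroup (ZMod N)) (B : AddSubgroup (ZMod M)),
      Nat.card (A →+ ZMod M ⧸ B) = Nat.gcd (Nat.card A) (M / Nat.card B) := by
    intro A B
    haveI : IsAddCyclic (ZMod M ⧸ B) :=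
      isAddCyclic_of_surjective (QuotientAddGroup.mk' B) (QuotientAddGroup.mk'_surjective B)
    have hqcard : Nat.card (ZMod M ⧸ B) = M / Nat.card B := by
      have := AddSubgroup.card_eq_card_quotient_mul_card_addSubgroup B
      rw [Nat.card_zmod] at this
      have hbpos : 0 < Nat.card B := Nat.card_pos
      exact (Nat.div_eq_of_eq_mul_left hbpos this).symm
    rw [card_hom_cyclic A (ZMod M ⧸ B) inferInstance inferInstance, hqcard]
  calc Nat.card (Σ (A : AddSubgroup (ZMod N)) (B : AddSubgroup (ZMod M)), (A →+ ZMod M ⧸ B))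
      = ∑ A : AddSubgroup (ZMod N), ∑ B : AddSubgroup (ZMod M),
          Nat.card (A →+ ZMod M ⧸ B) := by
        rw [Nat.card_eq_fintype_card, Fintype.card_sigma]
        refine Finset.sum_congr rfl fun A _ => ?_
        rw [Fintype.card_sigma]
        refine Finset.sum_congr rfl fun B _ => ?_
        rw [Nat.card_eq_fintype_card]
    _ = ∑ A : AddSubgroup (ZMod N), ∑ B : AddSubgroup (ZMod M),
          Nat.gcd (Nat.card A) (M / Nat.card B) := by
        refine Finset.sum_congr rfl fun A _ => Finset.sum_congr rfl fun B _ => hcardhom A B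
    _ = ∑ A : AddSubgroup (ZMod N), ∑ e ∈ M.divisors, Nat.gcd (Nat.card A) (M / (M / e)) := by
        refine Finset.sum_congr rfl fun A _ => ?_
        exact sum_over_subgroups (fun b => Nat.gcd (Nat.card A) (M / b))
    _ = ∑ A : AddSubgroup (ZMod N), ∑ e ∈ M.divisors, Nat.gcd (Nat.card A) e := by
        refine Finset.sum_congr rfl fun A _ => Finset.sum_congr rfl fun e he => ?_
        rw [Nat.div_div_self (Nat.mem_divisors.mp he).1 hM]
    _ = ∑ d ∈ N.divisors, ∑ e ∈ M.divisors, Nat.gcd (N / d) e :=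
        sum_over_subgroups (fun a => ∑ e ∈ M.divisors, Nat.gcd a e)
    _ = ∑ d ∈ N.divisors, ∑ e ∈ M.divisors, Nat.gcd d e := by
        rw [← Nat.sum_div_divisors N (fun a => ∑ e ∈ M.divisors, Nat.gcd a e)]

end Together

section Arith

open Finset

variable (x : ℤ)

private def S (a b : ℕ) : ℤ := ∑ i ∈ range (a + 1), ∑ j ∈ range (b + 1), x ^ (min i j)

lemma rowsum {a b : ℕ} (h : b ≤ a) :
    ∑ j ∈ range (b + 1), x ^ (min a j) = ∑ j ∈ range (b + 1), x ^ j := by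
  refine Finset.sum_congr rfl fun j hj => ?_
  rw [min_eq_right (le_trans (Nat.lt_succ_iff.mp (Finset.mem_range.mp hj)) h)]

lemma geo (n : ℕ) : (x - 1) * ((x - 1) * ∑ i ∈ range n, x ^ i) = (x - 1) * (x ^ n - 1) := by
  rw [mul_comm (x - 1) (∑ i ∈ range n, x ^ i), geom_sum_mul]

lemma diag (l : ℕ) :
    (x - 1) ^ 2 * S x l l =
      x ^ (l + 2) + x ^ (l + 1) - (2 * (l : ℤ) + 3) * x + (2 * (l : ℤ) + 1) := by
  induction l with
  | zero => simp [S]; ring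
  | succ l ih =>
    have hS : S x (l + 1) (l + 1) =
        S x l l + (∑ i ∈ range (l + 1), x ^ i) + (∑ j ∈ range (l + 2), x ^ j) := by
      unfold S
      rw [Finset.sum_range_succ]
      have h1 : ∀ i ∈ range (l + 1),
          ∑ j ∈ range (l + 1 + 1), x ^ (min i j) =
            (∑ j ∈ range (l + 1), x ^ (min i j)) + x ^ i := by
        intro i hi
        rw [Finset.sum_range_succ, min_eq_left (Nat.le_succ_of_le
          (Nat.lt_succ_iff.mp (Finset.mem_range.mp hi)))]
      rw [Finset.sum_congr rfl h1, Finset.sum_add_distrib]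
      rw [rowsum x (le_refl (l + 1))]
    rw [hS]
    have expand : (x - 1) ^ 2 * (S x l l + (∑ i ∈ range (l + 1), x ^ i)
        + (∑ j ∈ range (l + 2), x ^ j)) =
        (x - 1) ^ 2 * S x l l + (x - 1) * ((x - 1) * ∑ i ∈ range (l + 1), x ^ i)
        + (x - 1) * ((x - 1) * ∑ j ∈ range (l + 2), x ^ j) := by ring
    rw [expand, geo, geo, ih]
    push_cast
    ring

lemma offdiag (k l : ℕ) :
    (x - 1) ^ 2 * S x (l + k) l =
      ((k : ℤ) + 1) * x ^ (l + 2) - ((k : ℤ) - 1) * x ^ (l + 1)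
        - (2 * (l : ℤ) + (k : ℤ) + 3) * x + (2 * (l : ℤ) + (k : ℤ) + 1) := by
  induction k with
  | zero =>
    simpa using diag x l
  | succ k ih =>
    have hS : S x (l + (k + 1)) l = S x (l + k) l + ∑ j ∈ range (l + 1), x ^ j := by
      unfold S
      have : l + (k + 1) + 1 = (l + k + 1) + 1 := by omega
      rw [this, Finset.sum_range_succ, rowsum x (by omega : l ≤ l + k + 1)]
    rw [hS]
    have expand : (x - 1) ^ 2 * (S x (l + k) l + ∑ j ∈ range (l + 1), x ^ j) =
        (x - 1) ^ 2 * S x (l + k) l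
          + (x - 1) * ((x - 1) * ∑ j ∈ range (l + 1), x ^ j) := by ring
    rw [expand, geo, ih]
    push_cast
    ring

end Arith

theorem stmt_3 (p : ℕ) (hp : p.Prime) (lam1 lam2 : ℕ)
    (h21 : lam2 ≤ lam1) (h2 : 1 ≤ lam2) :
    (Nat.card (AddSubgroup (ZMod (p ^ lam1) × ZMod (p ^ lam2))) : ℤ) =
      (((lam1 : ℤ) - lam2 + 1) * (p : ℤ) ^ (lam2 + 2)
        - ((lam1 : ℤ) - lam2 - 1) * (p : ℤ) ^ (lam2 + 1)
        - ((lam1 : ℤ) + lam2 + 3) * p + ((lam1 : ℤ) + lam2 + 1))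
        / ((p : ℤ) - 1) ^ 2 := by
  have hp2 : 2 ≤ p := hp.two_le
  have hN : p ^ lam1 ≠ 0 := pow_ne_zero _ hp.pos.ne'
  have hM : p ^ lam2 ≠ 0 := pow_ne_zero _ hp.pos.ne'
  rw [card_addSubgroup_prod_zmod _ _ hN hM]
  have hsum : ∑ d ∈ (p ^ lam1).divisors, ∑ e ∈ (p ^ lam2).divisors, Nat.gcd d e =
      ∑ i ∈ Finset.range (lam1 + 1), ∑ j ∈ Finset.range (lam2 + 1), p ^ (min i j) := by
    rw [Nat.divisors_prime_pow hp, Nat.divisors_prime_pow hp, Finset.sum_map]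
    refine Finset.sum_congr rfl fun i _ => ?_
    rw [Finset.sum_map]
    refine Finset.sum_congr rfl fun j _ => ?_
    show Nat.gcd (p ^ i) (p ^ j) = p ^ (min i j)
    rcases le_total i j with h | h
    · rw [Nat.gcd_eq_left (pow_dvd_pow p h), min_eq_left h]
    · rw [Nat.gcd_eq_right (pow_dvd_pow p h), min_eq_right h]
  rw [hsum]
  have hcastS : ((∑ i ∈ Finset.range (lam1 + 1), ∑ j ∈ Finset.range (lam2 + 1),
      p ^ (min i j) : ℕ) : ℤ) = S (p : ℤ) lam1 lam2 := by
    unfold S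
    push_cast
    rfl
  rw [hcastS]
  set k : ℕ := lam1 - lam2 with hkdef
  have hk : lam1 = lam2 + k := by omega
  have hcast : (lam1 : ℤ) = (lam2 : ℤ) + (k : ℤ) := by exact_mod_cast congrArg (Nat.cast) hk
  have key := offdiag (p : ℤ) k lam2
  rw [← hk] at key
  have hne : ((p : ℤ) - 1) ≠ 0 := by
    have : (2 : ℤ) ≤ (p : ℤ) := by exact_mod_cast hp2
    omega
  have hnum : (((lam1 : ℤ) - lam2 + 1) * (p : ℤ) ^ (lam2 + 2)
        - ((lam1 : ℤ) - lam2 - 1) * (p : ℤ) ^ (lam2 + 1)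
        - ((lam1 : ℤ) + lam2 + 3) * p + ((lam1 : ℤ) + lam2 + 1)) =
      ((p : ℤ) - 1) ^ 2 * S (p : ℤ) lam1 lam2 := by
    rw [hcast]
    linear_combination -key
  rw [hnum, Int.mul_ediv_cancel_left _ (pow_ne_zero 2 hne)]
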